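/- There is an involution σ on the set of standard Young tableaux of shapes (d+1, d+1, 1^(n-d-3)) (over all valid n, d) whose fixed points are exactly the tableaux in which the entries n+1, ..., n+d-1 all lie in the second row, and such that for any non-fixed tableau X, the number of boxes of σ(X) differs from that of X by exactly 1. -/

import Mathlib

/-- `c = (i, j)` is a cell of the Young diagram with row lengths `shape`
(row `i`, column `j`, both `0`-indexed). -/
def IsCell (shape : List ℕ) (c : ℕ × ℕ) : Prop := c.2 < shape.getD c.1 0

/-- `T` is a standard Young tableau of shape `shape`: it vanishes off the diagram,
its entries on the diagram are a filling by the distinct values `1, …, N`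
(`N` the number of boxes), and entries increase along rows and down columns. -/
def IsSYT (shape : List ℕ) (T : ℕ × ℕ → ℕ) : Prop :=
  (∀ c, ¬ IsCell shape c → T c = 0) ∧
  (∀ c, IsCell shape c → 1 ≤ T c ∧ T c ≤ shape.sum) ∧
  (∀ c c', IsCell shape c → IsCell shape c' → T c = T c' → c = c') ∧
  (∀ i j, IsCell shape (i, j + 1) → T (i, j) < T (i, j + 1)) ∧
  (∀ i j, IsCell shape (i + 1, j) → T (i, j) < T (i + 1, j))

/-- The number of standard Young tableaux of shape `shape`. -/
noncomputable def sytCount (shape : List ℕ) : ℕ :=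
  Nat.card {T : ℕ × ℕ → ℕ // IsSYT shape T}

/-- The associahedron shape `(d+1, d+1, 1^(n-d-3))`, with `n + d - 1` boxes. -/
def assocShape (n d : ℕ) : List ℕ := (d + 1) :: (d + 1) :: List.replicate (n - d - 3) 1

/-- An associahedron tableau: a triple `(n, d, T)` with `n ≥ 4`, `1 ≤ d ≤ n - 3`,
and `T` a standard Young tableau of shape `(d+1, d+1, 1^(n-d-3))`. -/
def AssocTableau : Type :=
  {x : ℕ × ℕ × ((ℕ × ℕ) → ℕ) //
    4 ≤ x.1 ∧ 1 ≤ x.2.1 ∧ x.2.1 ≤ x.1 - 3 ∧ IsSYT (assocShape x.1 x.2.1) x.2.2}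

/-- The number of boxes `n + d - 1` of an associahedron tableau. -/
def boxes (x : AssocTableau) : ℕ := x.1.1 + x.1.2.1 - 1

/-- The tableau restricts to a syzygy tableau: all of the entries
`n+1, …, n+d-1` lie in the second row. -/
def RestrictsToSyzygy (x : AssocTableau) : Prop :=
  ∀ k, x.1.1 + 1 ≤ k → k ≤ x.1.1 + x.1.2.1 - 1 →
    ∃ j, IsCell (assocShape x.1.1 x.1.2.1) (1, j) ∧ x.1.2.2 (1, j) = k

lemma repl_getD : ∀ m i, (List.replicate m (1:ℕ)).getD i 0 = if i < m then 1 else 0 := by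
  intro m
  induction m with
  | zero => intro i; simp
  | succ m ih =>
    intro i
    cases i with
    | zero => simp [List.replicate]
    | succ i => rw [List.replicate_succ, List.getD_cons_succ, ih i]; simp

lemma isCell_iff {n d : ℕ} (hnd : d + 3 ≤ n) (c : ℕ × ℕ) :
    IsCell (assocShape n d) c ↔
      (c.1 ≤ 1 ∧ c.2 ≤ d) ∨ (2 ≤ c.1 ∧ c.1 ≤ n - d - 2 ∧ c.2 = 0) := by
  obtain ⟨i, j⟩ := c
  rcases i with _ | _ | i
  · simp [IsCell, assocShape]
  · simp [IsCell, assocShape]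
  · simp only [IsCell, assocShape, List.getD_cons_succ, repl_getD]
    split <;> simp <;> omega

lemma assoc_sum {n d : ℕ} (hnd : d + 3 ≤ n) : (assocShape n d).sum = n + d - 1 := by
  simp [assocShape, List.sum_replicate]
  omega

section Helpers

variable {n d : ℕ} {T : ℕ × ℕ → ℕ}

lemma val_le (hnd : d + 3 ≤ n) (hT : IsSYT (assocShape n d) T)
    {c : ℕ × ℕ} (hc : IsCell (assocShape n d) c) : 1 ≤ T c ∧ T c ≤ n + d - 1 := by
  have := hT.2.1 c hc
  rwa [assoc_sum hnd] at this

lemma row_mono (hnd : d + 3 ≤ n) (hT : IsSYT (assocShape n d) T)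
    {j j' : ℕ} (h : j ≤ j') (h' : j' ≤ d) : T (1, j) ≤ T (1, j') := by
  induction j' with
  | zero => have : j = 0 := by omega
            subst this; exact le_refl _
  | succ m ih =>
    rcases Nat.eq_or_lt_of_le h with rfl | hlt
    · exact le_refl _
    · have hcell : IsCell (assocShape n d) (1, m + 1) := by
        rw [isCell_iff hnd]; left; exact ⟨by norm_num, h'⟩
      have := hT.2.2.2.1 1 m hcell
      have := ih (by omega) (by omega)
      omega

lemma maxCorner (hnd : d + 3 ≤ n) (hT : IsSYT (assocShape n d) T)
    (h : T (1, d) < n + d - 1) : d + 4 ≤ n ∧ T (n - d - 2, 0) = n + d - 1 := by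
  classical
  set N := n + d - 1 with hN
  set S : Finset (ℕ × ℕ) :=
    (Finset.range 2 ×ˢ Finset.range (d + 1)) ∪ (Finset.Icc 2 (n - d - 2) ×ˢ {0}) with hS
  have hmem : ∀ c : ℕ × ℕ, c ∈ S ↔ IsCell (assocShape n d) c := by
    rintro ⟨i, j⟩
    rw [isCell_iff hnd, hS]
    simp only [Finset.mem_union, Finset.mem_product, Finset.mem_range, Finset.mem_Icc,
      Finset.mem_singleton]
    omega
  have hcard : S.card = N := by
    rw [hS, Finset.card_union_of_disjoint]
    · rw [Finset.card_product, Finset.card_product, Finset.card_range,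
        Finset.card_range, Nat.card_Icc, Finset.card_singleton]
      omega
    · rw [Finset.disjoint_left]
      rintro ⟨i, j⟩ hc hc'
      simp only [Finset.mem_product, Finset.mem_range, Finset.mem_Icc,
        Finset.mem_singleton] at hc hc'
      omega
  have hsurj := Finset.surj_on_of_inj_on_of_card_le (s := S) (t := Finset.Icc 1 N)
    (fun c _ => T c)
    (fun c hc => by
      rw [Finset.mem_Icc]
      exact val_le hnd hT ((hmem c).1 hc))
    (fun c c' hc hc' hval => hT.2.2.1 c c' ((hmem c).1 hc) ((hmem c').1 hc') hval)
    (by rw [Nat.card_Icc, hcard]; omega)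
  obtain ⟨c, hcS, hcN⟩ := hsurj N (by rw [Finset.mem_Icc]; omega)
  have hcell := (hmem c).1 hcS
  obtain ⟨i, j⟩ := c
  replace hcN : T (i, j) = N := hcN.symm
  rw [isCell_iff hnd] at hcell
  dsimp only at hcell
  rcases hcell with ⟨hi, hj⟩ | ⟨hi2, hile, hj0⟩
  · exfalso
    interval_cases i
    · have hbelow : IsCell (assocShape n d) (1, j) := by
        rw [isCell_iff hnd]; left; exact ⟨le_refl 1, hj⟩
      have h1 := hT.2.2.2.2 0 j hbelow
      norm_num at h1
      have h2 := (val_le hnd hT hbelow).2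
      omega
    · rcases Nat.eq_or_lt_of_le hj with rfl | hjd
      · omega
      · have hright : IsCell (assocShape n d) (1, j + 1) := by
          rw [isCell_iff hnd]; left; exact ⟨le_refl 1, by omega⟩
        have h1 := hT.2.2.2.1 1 j hright
        have h2 := (val_le hnd hT hright).2
        omega
  · subst hj0
    have hn4 : d + 4 ≤ n := by omega
    rcases Nat.eq_or_lt_of_le hile with rfl | hlt
    · exact ⟨hn4, hcN⟩
    · exfalso
      have hdown : IsCell (assocShape n d) (i + 1, 0) := by
        rw [isCell_iff hnd]; right; exact ⟨by omega, by omega, rfl⟩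
      have h1 := hT.2.2.2.2 i 0 hdown
      have h2 := (val_le hnd hT hdown).2
      omega

end Helpers

def addT (n d : ℕ) (T : ℕ × ℕ → ℕ) : ℕ × ℕ → ℕ :=
  fun c => if c = (n - d - 1, 0) then n + d else T c

def subT (n d : ℕ) (T : ℕ × ℕ → ℕ) : ℕ × ℕ → ℕ :=
  fun c => if c = (n - d - 2, 0) then 0 else T c

section AddSub

variable {n d : ℕ} {T : ℕ × ℕ → ℕ}

lemma addT_isSYT (hnd : d + 3 ≤ n) (hT : IsSYT (assocShape n d) T) :
    IsSYT (assocShape (n + 1) d) (addT n d T) := by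
  have hnd' : d + 3 ≤ n + 1 := by omega
  have hnewcell : ¬ IsCell (assocShape n d) (n - d - 1, 0) := by
    rw [isCell_iff hnd]; dsimp only; omega
  have hTnew : T (n - d - 1, 0) = 0 := hT.1 _ hnewcell
  refine ⟨?_, ?_, ?_, ?_, ?_⟩
  · intro c hc
    have hc' : ¬ IsCell (assocShape n d) c := by
      rw [isCell_iff hnd'] at hc
      rw [isCell_iff hnd]
      omega
    have hne : c ≠ (n - d - 1, 0) := by
      rintro rfl
      apply hc
      rw [isCell_iff hnd']
      dsimp only
      omega
    simp only [addT, if_neg hne]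
    exact hT.1 c hc'
  · intro c hc
    rw [assoc_sum hnd']
    by_cases hne : c = (n - d - 1, 0)
    · simp only [addT, if_pos hne]; omega
    · simp only [addT, if_neg hne]
      have hc' : IsCell (assocShape n d) c := by
        rw [isCell_iff hnd'] at hc
        rw [isCell_iff hnd]
        rcases hc with h | h
        · exact Or.inl h
        · right
          refine ⟨h.1, ?_, h.2.2⟩
          rcases Nat.eq_or_lt_of_le h.2.1 with heq | hlt
          · exfalso; apply hne; rw [Prod.ext_iff]; exact ⟨by omega, h.2.2⟩
          · omega
      have := val_le hnd hT hc'
      omega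
  · intro c c' hc hc' heq
    by_cases h1 : c = (n - d - 1, 0) <;> by_cases h2 : c' = (n - d - 1, 0)
    · rw [h1, h2]
    all_goals simp only [addT, h1, h2, if_pos, if_neg, if_true, if_false] at heq
    · -- c new, c' old
      exfalso
      have hc'' : IsCell (assocShape n d) c' := by
        rw [isCell_iff hnd'] at hc'
        rw [isCell_iff hnd]
        rcases hc' with h | h
        · exact Or.inl h
        · right
          refine ⟨h.1, ?_, h.2.2⟩
          rcases Nat.eq_or_lt_of_le h.2.1 with heq2 | hlt
          · exfalso; apply h2; rw [Prod.ext_iff]; exact ⟨by omega, h.2.2⟩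
          · omega
      have := (val_le hnd hT hc'').2
      omega
    · exfalso
      have hc'' : IsCell (assocShape n d) c := by
        rw [isCell_iff hnd'] at hc
        rw [isCell_iff hnd]
        rcases hc with h | h
        · exact Or.inl h
        · right
          refine ⟨h.1, ?_, h.2.2⟩
          rcases Nat.eq_or_lt_of_le h.2.1 with heq2 | hlt
          · exfalso; apply h1; rw [Prod.ext_iff]; exact ⟨by omega, h.2.2⟩
          · omega
      have := (val_le hnd hT hc'').2
      omega
    · -- both old
      have hcell1 : IsCell (assocShape n d) c := by
        rw [isCell_iff hnd'] at hc
        rw [isCell_iff hnd]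
        rcases hc with h | h
        · exact Or.inl h
        · right
          refine ⟨h.1, ?_, h.2.2⟩
          rcases Nat.eq_or_lt_of_le h.2.1 with heq2 | hlt
          · exfalso; apply h1; rw [Prod.ext_iff]; exact ⟨by omega, h.2.2⟩
          · omega
      have hcell2 : IsCell (assocShape n d) c' := by
        rw [isCell_iff hnd'] at hc'
        rw [isCell_iff hnd]
        rcases hc' with h | h
        · exact Or.inl h
        · right
          refine ⟨h.1, ?_, h.2.2⟩
          rcases Nat.eq_or_lt_of_le h.2.1 with heq2 | hlt
          · exfalso; apply h2; rw [Prod.ext_iff]; exact ⟨by omega, h.2.2⟩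
          · omega
      exact hT.2.2.1 c c' hcell1 hcell2 heq
  · intro i j hc
    have h1 : (i, j) ≠ (n - d - 1, 0) := by
      rw [isCell_iff hnd'] at hc
      dsimp only at hc
      simp only [ne_eq, Prod.mk.injEq, not_and]
      omega
    have h2 : (i, j + 1) ≠ (n - d - 1, 0) := by
      simp only [ne_eq, Prod.mk.injEq, not_and]
      omega
    simp only [addT, if_neg h1, if_neg h2]
    apply hT.2.2.2.1
    rw [isCell_iff hnd'] at hc
    rw [isCell_iff hnd]
    dsimp only at hc ⊢
    omega
  · intro i j hc
    have h1 : (i, j) ≠ (n - d - 1, 0) := by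
      rw [isCell_iff hnd'] at hc
      dsimp only at hc
      simp only [ne_eq, Prod.mk.injEq, not_and]
      omega
    by_cases h2 : (i + 1, j) = (n - d - 1, 0)
    · simp only [addT, if_neg h1, if_pos h2]
      have hij : i = n - d - 2 ∧ j = 0 := by
        rw [Prod.ext_iff] at h2
        dsimp only at h2
        omega
      have hcell : IsCell (assocShape n d) (i, j) := by
        rw [isCell_iff hnd]
        dsimp only
        omega
      have := (val_le hnd hT hcell).2
      omega
    · simp only [addT, if_neg h1, if_neg h2]
      apply hT.2.2.2.2
      rw [isCell_iff hnd'] at hc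
      rw [isCell_iff hnd]
      dsimp only at hc ⊢
      simp only [Prod.mk.injEq, not_and] at h2
      omega

end AddSub

section Sub

variable {n d : ℕ} {T : ℕ × ℕ → ℕ}

lemma subT_isSYT (hnd : d + 4 ≤ n) (hT : IsSYT (assocShape n d) T)
    (hb : T (n - d - 2, 0) = n + d - 1) :
    IsSYT (assocShape (n - 1) d) (subT n d T) := by
  have hnd0 : d + 3 ≤ n := by omega
  have hnd' : d + 3 ≤ n - 1 := by omega
  have hbcell : IsCell (assocShape n d) (n - d - 2, 0) := by
    rw [isCell_iff hnd0]; dsimp only; omega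
  -- cells of the smaller shape are cells of the bigger shape, distinct from bcell
  have hsmall : ∀ c : ℕ × ℕ, IsCell (assocShape (n - 1) d) c →
      IsCell (assocShape n d) c ∧ c ≠ (n - d - 2, 0) := by
    rintro ⟨i, j⟩ hc
    rw [isCell_iff hnd'] at hc
    dsimp only at hc
    constructor
    · rw [isCell_iff hnd0]; dsimp only; omega
    · simp only [ne_eq, Prod.mk.injEq, not_and]; omega
  refine ⟨?_, ?_, ?_, ?_, ?_⟩
  · intro c hc
    by_cases hne : c = (n - d - 2, 0)
    · simp only [subT, if_pos hne]
    · simp only [subT, if_neg hne]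
      apply hT.1
      rw [isCell_iff hnd0]
      rw [isCell_iff hnd'] at hc
      rcases c with ⟨i, j⟩
      simp only [ne_eq, Prod.mk.injEq, not_and] at hne
      dsimp only at hc ⊢
      intro h
      apply hc
      rcases h with h | h
      · exact Or.inl h
      · right
        refine ⟨h.1, ?_, h.2.2⟩
        rcases Nat.eq_or_lt_of_le h.2.1 with heq | hlt
        · exfalso; exact hne (by omega) h.2.2
        · omega
  · intro c hc
    obtain ⟨hcb, hcne⟩ := hsmall c hc
    rw [assoc_sum hnd']
    simp only [subT, if_neg hcne]
    have h1 := val_le hnd0 hT hcb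
    have h2 : T c ≠ n + d - 1 := by
      intro h
      exact hcne (hT.2.2.1 c _ hcb hbcell (by rw [h, hb]))
    omega
  · intro c c' hc hc' heq
    obtain ⟨hcb, hcne⟩ := hsmall c hc
    obtain ⟨hcb', hcne'⟩ := hsmall c' hc'
    simp only [subT, if_neg hcne, if_neg hcne'] at heq
    exact hT.2.2.1 c c' hcb hcb' heq
  · intro i j hc
    obtain ⟨hcb, hcne⟩ := hsmall _ hc
    have h1 : (i, j) ≠ (n - d - 2, 0) := by
      rw [isCell_iff hnd'] at hc
      dsimp only at hc
      simp only [ne_eq, Prod.mk.injEq, not_and]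
      omega
    simp only [subT, if_neg h1, if_neg hcne]
    exact hT.2.2.2.1 i j hcb
  · intro i j hc
    obtain ⟨hcb, hcne⟩ := hsmall _ hc
    have h1 : (i, j) ≠ (n - d - 2, 0) := by
      rw [isCell_iff hnd'] at hc
      dsimp only at hc
      simp only [ne_eq, Prod.mk.injEq, not_and]
      omega
    simp only [subT, if_neg h1, if_neg hcne]
    exact hT.2.2.2.2 i j hcb

end Sub

section Syz

variable {n d : ℕ} {T : ℕ × ℕ → ℕ}

lemma syz_char (hd1 : 1 ≤ d) (hnd : d + 3 ≤ n) (hT : IsSYT (assocShape n d) T) :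
    (∀ k, n + 1 ≤ k → k ≤ n + d - 1 →
        ∃ j, IsCell (assocShape n d) (1, j) ∧ T (1, j) = k) ↔
      (d ≤ 1 ∨ n + 1 ≤ T (1, 2)) := by
  classical
  constructor
  · intro hsyz
    by_contra hcon
    push_neg at hcon
    obtain ⟨hd2, hv⟩ := hcon
    replace hd2 : 2 ≤ d := by omega
    replace hv : T (1, 2) ≤ n := by omega
    choose! j hj1 hj2 using hsyz
    have hmap : ∀ k ∈ Finset.Icc (n + 1) (n + d - 1), j k ∈ Finset.Icc 3 d := by
      intro k hk
      rw [Finset.mem_Icc] at hk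
      have h1 := hj1 k hk.1 hk.2
      have h2 := hj2 k hk.1 hk.2
      rw [isCell_iff hnd] at h1
      dsimp only at h1
      have hjd : j k ≤ d := by omega
      rw [Finset.mem_Icc]
      refine ⟨?_, hjd⟩
      by_contra hj3
      push_neg at hj3
      have := row_mono hnd hT (show j k ≤ 2 by omega) (by omega)
      omega
    have hinj : Set.InjOn j (Finset.Icc (n + 1) (n + d - 1)) := by
      intro k hk k' hk' heq
      rw [Finset.coe_Icc, Set.mem_Icc] at hk hk'
      have h2 := hj2 k hk.1 hk.2
      have h2' := hj2 k' hk'.1 hk'.2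
      rw [← h2, ← h2', heq]
    have hcard := Finset.card_le_card_of_injOn j hmap hinj
    rw [Nat.card_Icc, Nat.card_Icc] at hcard
    omega
  · intro h k hk1 hk2
    rcases h with h | h
    · omega
    · have hd2 : 2 ≤ d := by omega
      have hsurj := Finset.surj_on_of_inj_on_of_card_le
        (s := Finset.Icc 2 d) (t := Finset.Icc (n + 1) (n + d - 1))
        (fun j _ => T (1, j))
        (fun jj hjj => by
          rw [Finset.mem_Icc] at hjj ⊢
          show n + 1 ≤ T (1, jj) ∧ T (1, jj) ≤ n + d - 1
          have hcell : IsCell (assocShape n d) (1, jj) := by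
            rw [isCell_iff hnd]; dsimp only; omega
          have h1 := row_mono hnd hT hjj.1 hjj.2
          have h2 := (val_le hnd hT hcell).2
          omega)
        (fun j1 j2 hj1 hj2 heq => by
          rw [Finset.mem_Icc] at hj1 hj2
          have hc1 : IsCell (assocShape n d) (1, j1) := by
            rw [isCell_iff hnd]; dsimp only; omega
          have hc2 : IsCell (assocShape n d) (1, j2) := by
            rw [isCell_iff hnd]; dsimp only; omega
          have := hT.2.2.1 _ _ hc1 hc2 heq
          exact (Prod.ext_iff.1 this).2)
        (by rw [Nat.card_Icc, Nat.card_Icc]; omega)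
      obtain ⟨jj, hjj, hjk⟩ := hsurj k (by rw [Finset.mem_Icc]; omega)
      rw [Finset.mem_Icc] at hjj
      replace hjk : T (1, jj) = k := hjk.symm
      exact ⟨jj, by rw [isCell_iff hnd]; dsimp only; omega, hjk⟩

end Syz

section RemoveFacts

variable {n d : ℕ} {T : ℕ × ℕ → ℕ}

lemma remove_facts (hd1 : 1 ≤ d) (hnd : d + 3 ≤ n) (hT : IsSYT (assocShape n d) T)
    (hs : ¬(d ≤ 1 ∨ n + 1 ≤ T (1, 2)))
    (hp : ¬((n + d - 1 - T (1, d)) +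
        (T (1, 2) + (n + d - 1 - T (1, d)) - n)) % 2 = 0) :
    d + 4 ≤ n ∧ T (n - d - 2, 0) = n + d - 1 ∧ T (1, 2) ≤ n - 1 ∧
      1 ≤ n + d - 1 - T (1, d) := by
  push_neg at hs
  have hv : T (1, 2) ≤ n := by omega
  have hcell : IsCell (assocShape n d) (1, d) := by
    rw [isCell_iff hnd]; dsimp only; omega
  have hTd := (val_le hnd hT hcell).2
  have ht : 1 ≤ n + d - 1 - T (1, d) := by omega
  have hmax := maxCorner hnd hT (by omega)
  exact ⟨hmax.1, hmax.2, by omega, ht⟩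

end RemoveFacts

def invo (x : AssocTableau) : AssocTableau :=
  if _hs : x.1.2.1 ≤ 1 ∨ x.1.1 + 1 ≤ x.1.2.2 (1, 2) then x
  else if _hp : ((x.1.1 + x.1.2.1 - 1 - x.1.2.2 (1, x.1.2.1)) +
      (x.1.2.2 (1, 2) + (x.1.1 + x.1.2.1 - 1 - x.1.2.2 (1, x.1.2.1)) - x.1.1)) % 2 = 0
  then ⟨(x.1.1 + 1, x.1.2.1, addT x.1.1 x.1.2.1 x.1.2.2), by
    have h4 := x.2.1
    have hd1 := x.2.2.1
    have hd3 := x.2.2.2.1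
    have hT := x.2.2.2.2
    show 4 ≤ x.1.1 + 1 ∧ 1 ≤ x.1.2.1 ∧ x.1.2.1 ≤ x.1.1 + 1 - 3 ∧
      IsSYT (assocShape (x.1.1 + 1) x.1.2.1) (addT x.1.1 x.1.2.1 x.1.2.2)
    exact ⟨by omega, hd1, by omega, addT_isSYT (by omega) hT⟩⟩
  else ⟨(x.1.1 - 1, x.1.2.1, subT x.1.1 x.1.2.1 x.1.2.2), by
    have h4 := x.2.1
    have hd1 := x.2.2.1
    have hd3 := x.2.2.2.1
    have hT := x.2.2.2.2
    have hnd : x.1.2.1 + 3 ≤ x.1.1 := by omega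
    obtain ⟨h1, h2, h3, h5⟩ := remove_facts hd1 hnd hT _hs _hp
    show 4 ≤ x.1.1 - 1 ∧ 1 ≤ x.1.2.1 ∧ x.1.2.1 ≤ x.1.1 - 1 - 3 ∧
      IsSYT (assocShape (x.1.1 - 1) x.1.2.1) (subT x.1.1 x.1.2.1 x.1.2.2)
    exact ⟨by omega, hd1, by omega, subT_isSYT h1 hT h2⟩⟩

lemma invo_pos (x : AssocTableau) (hs : x.1.2.1 ≤ 1 ∨ x.1.1 + 1 ≤ x.1.2.2 (1, 2)) :
    invo x = x := by
  unfold invo; rw [dif_pos hs]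

lemma invo_add (x : AssocTableau) (hs : ¬(x.1.2.1 ≤ 1 ∨ x.1.1 + 1 ≤ x.1.2.2 (1, 2)))
    (hp : ((x.1.1 + x.1.2.1 - 1 - x.1.2.2 (1, x.1.2.1)) +
      (x.1.2.2 (1, 2) + (x.1.1 + x.1.2.1 - 1 - x.1.2.2 (1, x.1.2.1)) - x.1.1)) % 2 = 0) :
    (invo x).1 = (x.1.1 + 1, x.1.2.1, addT x.1.1 x.1.2.1 x.1.2.2) := by
  unfold invo; rw [dif_neg hs]; exact congrArg Subtype.val (dif_pos hp)

lemma invo_sub (x : AssocTableau) (hs : ¬(x.1.2.1 ≤ 1 ∨ x.1.1 + 1 ≤ x.1.2.2 (1, 2)))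
    (hp : ¬((x.1.1 + x.1.2.1 - 1 - x.1.2.2 (1, x.1.2.1)) +
      (x.1.2.2 (1, 2) + (x.1.1 + x.1.2.1 - 1 - x.1.2.2 (1, x.1.2.1)) - x.1.1)) % 2 = 0) :
    (invo x).1 = (x.1.1 - 1, x.1.2.1, subT x.1.1 x.1.2.1 x.1.2.2) := by
  unfold invo; rw [dif_neg hs]; exact congrArg Subtype.val (dif_neg hp)

section Cancel

variable {n d : ℕ} {T : ℕ × ℕ → ℕ}

lemma subT_addT (hnd : d + 3 ≤ n) (hT : IsSYT (assocShape n d) T) :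
    subT (n + 1) d (addT n d T) = T := by
  funext c
  have hkey : n + 1 - d - 2 = n - d - 1 := by omega
  by_cases h : c = (n - d - 1, 0)
  · simp only [subT, hkey, if_pos h]
    rw [h]
    refine (hT.1 _ ?_).symm
    rw [isCell_iff hnd]
    dsimp only
    omega
  · simp only [subT, hkey, if_neg h, addT, if_neg h]

lemma addT_subT (hnd4 : d + 4 ≤ n) (hb : T (n - d - 2, 0) = n + d - 1) :
    addT (n - 1) d (subT n d T) = T := by
  funext c
  have hkey : n - 1 - d - 1 = n - d - 2 := by omega
  by_cases h : c = (n - d - 2, 0)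
  · simp only [addT, hkey, if_pos h]
    rw [h, hb]
    omega
  · simp only [addT, hkey, if_neg h, subT, if_neg h]

end Cancel

lemma invo_invo (x : AssocTableau) : invo (invo x) = x := by
  by_cases hs : x.1.2.1 ≤ 1 ∨ x.1.1 + 1 ≤ x.1.2.2 (1, 2)
  · rw [invo_pos x hs, invo_pos x hs]
  · have h4 := x.2.1
    have hd1 := x.2.2.1
    have hd3 := x.2.2.2.1
    have hT := x.2.2.2.2
    have hnd : x.1.2.1 + 3 ≤ x.1.1 := by omega
    have hs0 := hs
    push_neg at hs0
    have hcelld : IsCell (assocShape x.1.1 x.1.2.1) (1, x.1.2.1) := by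
      rw [isCell_iff hnd]; dsimp only; omega
    have hTd := (val_le hnd hT hcelld).2
    by_cases hp : ((x.1.1 + x.1.2.1 - 1 - x.1.2.2 (1, x.1.2.1)) +
        (x.1.2.2 (1, 2) + (x.1.1 + x.1.2.1 - 1 - x.1.2.2 (1, x.1.2.1)) - x.1.1)) % 2 = 0
    · -- add case
      have hy := invo_add x hs hp
      have haddv : addT x.1.1 x.1.2.1 x.1.2.2 (1, 2) = x.1.2.2 (1, 2) := by
        simp only [addT, if_neg (show (1, 2) ≠ (x.1.1 - x.1.2.1 - 1, 0) by
          simp only [ne_eq, Prod.mk.injEq, not_and]; omega)]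
      have haddd : addT x.1.1 x.1.2.1 x.1.2.2 (1, x.1.2.1) = x.1.2.2 (1, x.1.2.1) := by
        simp only [addT, if_neg (show (1, x.1.2.1) ≠ (x.1.1 - x.1.2.1 - 1, 0) by
          simp only [ne_eq, Prod.mk.injEq, not_and]; omega)]
      have hs' : ¬((invo x).1.2.1 ≤ 1 ∨ (invo x).1.1 + 1 ≤ (invo x).1.2.2 (1, 2)) := by
        rw [hy]; dsimp only; rw [haddv]; omega
      have hp' : ¬(((invo x).1.1 + (invo x).1.2.1 - 1 - (invo x).1.2.2 (1, (invo x).1.2.1)) +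
          ((invo x).1.2.2 (1, 2) +
            ((invo x).1.1 + (invo x).1.2.1 - 1 - (invo x).1.2.2 (1, (invo x).1.2.1)) -
            (invo x).1.1)) % 2 = 0 := by
        rw [hy]; dsimp only; rw [haddv, haddd]; omega
      have hyy := invo_sub (invo x) hs' hp'
      rw [hy] at hyy
      dsimp only at hyy
      apply Subtype.ext
      rw [hyy, subT_addT hnd hT]
      rfl
    · -- sub case
      obtain ⟨hn4, hb, hvle, ht⟩ := remove_facts hd1 hnd hT hs hp
      have hy := invo_sub x hs hp
      have hsubv : subT x.1.1 x.1.2.1 x.1.2.2 (1, 2) = x.1.2.2 (1, 2) := by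
        simp only [subT, if_neg (show (1, 2) ≠ (x.1.1 - x.1.2.1 - 2, 0) by
          simp only [ne_eq, Prod.mk.injEq, not_and]; omega)]
      have hsubd : subT x.1.1 x.1.2.1 x.1.2.2 (1, x.1.2.1) = x.1.2.2 (1, x.1.2.1) := by
        simp only [subT, if_neg (show (1, x.1.2.1) ≠ (x.1.1 - x.1.2.1 - 2, 0) by
          simp only [ne_eq, Prod.mk.injEq, not_and]; omega)]
      have hs' : ¬((invo x).1.2.1 ≤ 1 ∨ (invo x).1.1 + 1 ≤ (invo x).1.2.2 (1, 2)) := by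
        rw [hy]; dsimp only; rw [hsubv]; omega
      have hp' : (((invo x).1.1 + (invo x).1.2.1 - 1 - (invo x).1.2.2 (1, (invo x).1.2.1)) +
          ((invo x).1.2.2 (1, 2) +
            ((invo x).1.1 + (invo x).1.2.1 - 1 - (invo x).1.2.2 (1, (invo x).1.2.1)) -
            (invo x).1.1)) % 2 = 0 := by
        rw [hy]; dsimp only; rw [hsubv, hsubd]; omega
      have hyy := invo_add (invo x) hs' hp'
      rw [hy] at hyy
      dsimp only at hyy
      apply Subtype.ext
      rw [hyy, addT_subT hn4 hb, show x.1.1 - 1 + 1 = x.1.1 by omega]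

lemma invo_fix_iff (x : AssocTableau) :
    invo x = x ↔ (x.1.2.1 ≤ 1 ∨ x.1.1 + 1 ≤ x.1.2.2 (1, 2)) := by
  constructor
  · intro heq
    by_contra hs
    have h4 := x.2.1
    by_cases hp : ((x.1.1 + x.1.2.1 - 1 - x.1.2.2 (1, x.1.2.1)) +
        (x.1.2.2 (1, 2) + (x.1.1 + x.1.2.1 - 1 - x.1.2.2 (1, x.1.2.1)) - x.1.1)) % 2 = 0
    · have hy := invo_add x hs hp
      rw [heq] at hy
      have := congrArg Prod.fst hy
      dsimp only at this
      omega
    · have hy := invo_sub x hs hp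
      rw [heq] at hy
      have := congrArg Prod.fst hy
      dsimp only at this
      omega
  · exact invo_pos x


/-- There is an involution on the set of all associahedron tableaux whose fixed points
are exactly the tableaux restricting to syzygy tableaux, and which changes the number
of boxes of any non-fixed tableau by exactly `1`. -/
theorem assoc_tableau_involution :
    ∃ f : AssocTableau → AssocTableau,
      (∀ x, f (f x) = x) ∧
      (∀ x, f x = x ↔ RestrictsToSyzygy x) ∧
      (∀ x, f x ≠ x → boxes (f x) = boxes x + 1 ∨ boxes x = boxes (f x) + 1) := by
  refine ⟨invo, invo_invo, ?_, ?_⟩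
  · intro x
    have h4 := x.2.1
    have hd1 := x.2.2.1
    have hd3 := x.2.2.2.1
    have hT := x.2.2.2.2
    have hnd : x.1.2.1 + 3 ≤ x.1.1 := by omega
    exact (invo_fix_iff x).trans (syz_char hd1 hnd hT).symm
  · intro x hne
    have h4 := x.2.1
    have hd1 := x.2.2.1
    have hd3 := x.2.2.2.1
    have hT := x.2.2.2.2
    have hnd : x.1.2.1 + 3 ≤ x.1.1 := by omega
    have hs : ¬(x.1.2.1 ≤ 1 ∨ x.1.1 + 1 ≤ x.1.2.2 (1, 2)) :=
      fun h => hne (invo_pos x h)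
    by_cases hp : ((x.1.1 + x.1.2.1 - 1 - x.1.2.2 (1, x.1.2.1)) +
        (x.1.2.2 (1, 2) + (x.1.1 + x.1.2.1 - 1 - x.1.2.2 (1, x.1.2.1)) - x.1.1)) % 2 = 0
    · left
      unfold boxes
      rw [invo_add x hs hp]
      dsimp only
      omega
    · right
      obtain ⟨hn4, _, _, _⟩ := remove_facts hd1 hnd hT hs hp
      unfold boxes
      rw [invo_sub x hs hp]
      dsimp only
      omega
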